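/- Assume the Common Givens: P_i is a preference order on C consistent with Q; the query is the pair (c_j,c_k) with P_i(c_j,c_k); and neither (c_j,c_k) nor (c_k,c_j) belongs to Q. Let P' ∈ μ(P_i), and let c_j', c_k' ∈ C be candidates with P_i(c_j',c_j) and P_i(c_k,c_k'). Then the following set equalities hold: [∞, P_i, c_j'] = [∞, P', c_j'] (i.e. c_j' together with the candidates above c_j' is the same set in P_i and in P'), and [c_k', P_i, −∞] = [c_k', P', −∞] (i.e. c_k' together with the candidates below c_k' is the same set in P_i and in P'). -/
import Mathlib


/-- A preference order: a strict total order on candidates. -/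
def IsPref {C : Type*} (P : C → C → Prop) : Prop :=
  (∀ a b : C, a ≠ b → P a b ∨ P b a) ∧ (∀ a : C, ¬ P a a) ∧
    ∀ a b c : C, P a b → P b c → P a c

/-- The (closed) segment `[c, P, c']` of candidates between `c` and `c'`. -/
def seg {C : Type*} (P : C → C → Prop) (c c' : C) : Set C :=
  {d : C | (d = c ∨ P c d) ∧ (d = c' ∨ P d c')}

/-- `Q` is a strict partial order (consistent, transitively closed reported preferences). -/
def IsSPO {C : Type*} (Q : C → C → Prop) : Prop :=
  (∀ a : C, ¬ Q a a) ∧ ∀ a b c : C, Q a b → Q b c → Q a c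

/-- `P` is consistent with (extends) the reported preferences `Q`, written `P ⊨ Q`. -/
def Extends {C : Type*} (P Q : C → C → Prop) : Prop := ∀ a b : C, Q a b → P a b

/-- The swap distance between two preference orders: the number of (unordered) pairs of
candidates ordered differently, counted here as ordered pairs `(a, b)` with
`P a b` and `P' b a`. -/
noncomputable def dswap {C : Type*} [Fintype C] (P P' : C → C → Prop) : ℕ :=
  Set.ncard {p : C × C | P p.1 p.2 ∧ P' p.2 p.1}

/-- `P` is a preference order consistent with the transitive closure of `Q ∪ {(ck, cj)}`
(for a transitive total order this is the same as extending `Q` and putting `ck` above `cj`). -/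
def Feasible {C : Type*} (Q : C → C → Prop) (cj ck : C) (P : C → C → Prop) : Prop :=
  IsPref P ∧ Extends P Q ∧ P ck cj

/-- `P ∈ μ(Pi)`: among all preference orders consistent with the transitive closure of
`Q ∪ {(ck, cj)}`, `P` minimizes the swap distance to `Pi`. -/
def InMu {C : Type*} [Fintype C] (Q : C → C → Prop) (cj ck : C)
    (Pi P : C → C → Prop) : Prop :=
  Feasible Q cj ck P ∧ ∀ R : C → C → Prop, Feasible Q cj ck R → dswap Pi P ≤ dswap Pi R

set_option linter.unusedSectionVars false
set_option linter.unusedVariables false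

set_option maxHeartbeats 1000000

section keylemmas
variable {C : Type*} [Fintype C]

lemma pref_asymm {P : C → C → Prop} (h : IsPref P) {a b : C} (hab : P a b) : ¬ P b a :=
  fun hba => h.2.1 a (h.2.2 a b a hab hba)

/-- No inversion of a minimizer touches an upward-closed set avoiding `cj, ck`. -/
lemma key_top (Q : C → C → Prop)
    (Pi : C → C → Prop) (hPi : IsPref Pi)
    (cj ck : C)
    (P' : C → C → Prop) (hmu : InMu Q cj ck Pi P')
    (A : Set C) (hup : ∀ x y, y ∈ A → Pi x y → x ∈ A)
    (hcjA : cj ∉ A) (hckA : ck ∉ A)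
    (hPiQ : Extends Pi Q) :
    ∀ x y, Pi x y → P' y x → x ∉ A ∧ y ∉ A := by
  classical
  obtain ⟨⟨⟨hP'tot, hP'irr, hP'tr⟩, hExt, hkj⟩, hmin⟩ := hmu
  intro x y hxy hyx
  by_contra hC
  have hxA : x ∈ A := by
    rcases not_and_or.1 hC with h | h
    · exact not_not.1 h
    · exact hup x y (not_not.1 h) hxy
  set R : C → C → Prop := fun a b =>
    (a ∈ A ∧ b ∈ A ∧ Pi a b) ∨ (a ∈ A ∧ b ∉ A) ∨ (a ∉ A ∧ b ∉ A ∧ P' a b) with hR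
  have hRfeas : Feasible Q cj ck R := by
    refine ⟨⟨?_, ?_, ?_⟩, ?_, ?_⟩
    · intro a b hne
      simp only [hR]
      by_cases ha : a ∈ A <;> by_cases hb : b ∈ A
      · rcases hPi.1 a b hne with h | h <;> tauto
      · tauto
      · tauto
      · rcases hP'tot a b hne with h | h <;> tauto
    · intro a h
      rcases h with ⟨_, _, h⟩ | ⟨h1, h2⟩ | ⟨_, _, h⟩
      · exact hPi.2.1 a h
      · exact h2 h1
      · exact hP'irr a h
    · intro a b c hab hbc
      rcases hab with ⟨ha, hb, hab⟩ | ⟨ha, hb⟩ | ⟨ha, hb, hab⟩ <;>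
        rcases hbc with ⟨hb', hc, hbc⟩ | ⟨hb', hc⟩ | ⟨hb', hc, hbc⟩ <;>
          first
            | exact absurd hb hb'
            | exact absurd hb' hb
            | exact Or.inl ⟨ha, hc, hPi.2.2 a b c hab hbc⟩
            | exact Or.inr (Or.inl ⟨ha, hc⟩)
            | exact Or.inr (Or.inr ⟨ha, hc, hP'tr a b c hab hbc⟩)
    · intro a b hQab
      by_cases ha : a ∈ A <;> by_cases hb : b ∈ A
      · exact Or.inl ⟨ha, hb, hPiQ a b hQab⟩
      · exact Or.inr (Or.inl ⟨ha, hb⟩)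
      · exact absurd (hup a b hb (hPiQ a b hQab)) ha
      · exact Or.inr (Or.inr ⟨ha, hb, hExt a b hQab⟩)
    · exact Or.inr (Or.inr ⟨hckA, hcjA, hkj⟩)
  have hsub : {p : C × C | Pi p.1 p.2 ∧ R p.2 p.1} ⊂ {p : C × C | Pi p.1 p.2 ∧ P' p.2 p.1} := by
    constructor
    · rintro ⟨a, b⟩ ⟨hab, hRba⟩
      rcases hRba with ⟨hb, ha, hba⟩ | ⟨hb, ha⟩ | ⟨hb, ha, hba⟩
      · exact absurd hab (pref_asymm hPi hba)
      · exact absurd (hup a b hb hab) ha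
      · exact ⟨hab, hba⟩
    · intro hsup
      have hmem : (x, y) ∈ {p : C × C | Pi p.1 p.2 ∧ R p.2 p.1} := hsup ⟨hxy, hyx⟩
      rcases hmem.2 with ⟨_, _, h⟩ | ⟨_, h⟩ | ⟨_, h, _⟩
      · exact pref_asymm hPi hxy h
      · exact h hxA
      · exact h hxA
  have hlt : dswap Pi R < dswap Pi P' := Set.ncard_lt_ncard hsub (Set.toFinite _)
  exact absurd (hmin R hRfeas) (not_le.2 hlt)

/-- No inversion of a minimizer touches a downward-closed set avoiding `cj, ck`. -/
lemma key_bot (Q : C → C → Prop)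
    (Pi : C → C → Prop) (hPi : IsPref Pi)
    (cj ck : C)
    (P' : C → C → Prop) (hmu : InMu Q cj ck Pi P')
    (B : Set C) (hdn : ∀ x y, x ∈ B → Pi x y → y ∈ B)
    (hcjB : cj ∉ B) (hckB : ck ∉ B)
    (hPiQ : Extends Pi Q) :
    ∀ x y, Pi x y → P' y x → x ∉ B ∧ y ∉ B := by
  classical
  obtain ⟨⟨⟨hP'tot, hP'irr, hP'tr⟩, hExt, hkj⟩, hmin⟩ := hmu
  intro x y hxy hyx
  by_contra hC
  have hyB : y ∈ B := by
    rcases not_and_or.1 hC with h | h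
    · exact hdn x y (not_not.1 h) hxy
    · exact not_not.1 h
  set R : C → C → Prop := fun a b =>
    (a ∈ B ∧ b ∈ B ∧ Pi a b) ∨ (a ∉ B ∧ b ∈ B) ∨ (a ∉ B ∧ b ∉ B ∧ P' a b) with hR
  have hRfeas : Feasible Q cj ck R := by
    refine ⟨⟨?_, ?_, ?_⟩, ?_, ?_⟩
    · intro a b hne
      simp only [hR]
      by_cases ha : a ∈ B <;> by_cases hb : b ∈ B
      · rcases hPi.1 a b hne with h | h <;> tauto
      · tauto
      · tauto
      · rcases hP'tot a b hne with h | h <;> tauto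
    · intro a h
      rcases h with ⟨_, _, h⟩ | ⟨h1, h2⟩ | ⟨_, _, h⟩
      · exact hPi.2.1 a h
      · exact h1 h2
      · exact hP'irr a h
    · intro a b c hab hbc
      rcases hab with ⟨ha, hb, hab⟩ | ⟨ha, hb⟩ | ⟨ha, hb, hab⟩ <;>
        rcases hbc with ⟨hb', hc, hbc⟩ | ⟨hb', hc⟩ | ⟨hb', hc, hbc⟩ <;>
          first
            | exact absurd hb hb'
            | exact absurd hb' hb
            | exact Or.inl ⟨ha, hc, hPi.2.2 a b c hab hbc⟩
            | exact Or.inr (Or.inl ⟨ha, hc⟩)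
            | exact Or.inr (Or.inr ⟨ha, hc, hP'tr a b c hab hbc⟩)
    · intro a b hQab
      by_cases ha : a ∈ B <;> by_cases hb : b ∈ B
      · exact Or.inl ⟨ha, hb, hPiQ a b hQab⟩
      · exact absurd (hdn a b ha (hPiQ a b hQab)) hb
      · exact Or.inr (Or.inl ⟨ha, hb⟩)
      · exact Or.inr (Or.inr ⟨ha, hb, hExt a b hQab⟩)
    · exact Or.inr (Or.inr ⟨hckB, hcjB, hkj⟩)
  have hsub : {p : C × C | Pi p.1 p.2 ∧ R p.2 p.1} ⊂ {p : C × C | Pi p.1 p.2 ∧ P' p.2 p.1} := by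
    constructor
    · rintro ⟨a, b⟩ ⟨hab, hRba⟩
      rcases hRba with ⟨hb, ha, hba⟩ | ⟨hb, ha⟩ | ⟨hb, ha, hba⟩
      · exact absurd hab (pref_asymm hPi hba)
      · exact absurd (hdn a b ha hab) hb
      · exact ⟨hab, hba⟩
    · intro hsup
      have hmem : (x, y) ∈ {p : C × C | Pi p.1 p.2 ∧ R p.2 p.1} := hsup ⟨hxy, hyx⟩
      rcases hmem.2 with ⟨hy, _, h⟩ | ⟨hy, _⟩ | ⟨hy, _, _⟩
      · exact pref_asymm hPi hxy h
      · exact hy hyB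
      · exact hy hyB
  have hlt : dswap Pi R < dswap Pi P' := Set.ncard_lt_ncard hsub (Set.toFinite _)
  exact absurd (hmin R hRfeas) (not_le.2 hlt)

end keylemmas

theorem statement9 {C : Type*} [Fintype C]
    (Q : C → C → Prop) (hQ : IsSPO Q)
    (Pi : C → C → Prop) (hPi : IsPref Pi) (hPiQ : Extends Pi Q)
    (cj ck : C) (hjk : Pi cj ck) (hQjk : ¬ Q cj ck) (hQkj : ¬ Q ck cj)
    (P' : C → C → Prop) (hmu : InMu Q cj ck Pi P')
    (cj' ck' : C) (hcj' : Pi cj' cj) (hck' : Pi ck ck') :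
    ({d : C | d = cj' ∨ Pi d cj'} = {d : C | d = cj' ∨ P' d cj'}) ∧
      {d : C | d = ck' ∨ Pi ck' d} = {d : C | d = ck' ∨ P' ck' d} := by

  classical
  obtain ⟨⟨⟨hP'tot, hP'irr, hP'tr⟩, hExt, hkj⟩, hmin⟩ := hmu
  have hPiasym : ∀ a b : C, Pi a b → ¬ Pi b a := fun a b h h' => hPi.2.1 a (hPi.2.2 a b a h h')
  have hP'asym : ∀ a b : C, P' a b → ¬ P' b a := fun a b h h' => hP'irr a (hP'tr a b a h h')
  constructor
  · -- top segment
    set A : Set C := {d | d = cj' ∨ Pi d cj'} with hA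
    have hup : ∀ x y, y ∈ A → Pi x y → x ∈ A := by
      rintro x y (rfl | hy) hxy
      · exact Or.inr hxy
      · exact Or.inr (hPi.2.2 x y cj' hxy hy)
    have hcjA : cj ∉ A := by
      rintro (rfl | h)
      · exact hPi.2.1 cj hcj'
      · exact hPiasym cj' cj hcj' h
    have hckA : ck ∉ A := by
      have hck2 : Pi cj' ck := hPi.2.2 cj' cj ck hcj' hjk
      rintro (rfl | h)
      · exact hPi.2.1 ck hck2
      · exact hPiasym cj' ck hck2 h
    have hkey := key_top Q Pi hPi cj ck P' ⟨⟨⟨hP'tot, hP'irr, hP'tr⟩, hExt, hkj⟩, hmin⟩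
      A hup hcjA hckA hPiQ
    have hcj'A : cj' ∈ A := Or.inl rfl
    ext d
    simp only [Set.mem_setOf_eq]
    constructor
    · rintro (rfl | h)
      · exact Or.inl rfl
      · refine Or.inr ?_
        by_contra hP
        have hne : d ≠ cj' := fun he => hPi.2.1 cj' (he ▸ h)
        rcases hP'tot d cj' hne with h' | h'
        · exact hP h'
        · exact (hkey d cj' h h').2 hcj'A
    · rintro (rfl | h)
      · exact Or.inl rfl
      · refine Or.inr ?_
        by_contra hP
        have hne : d ≠ cj' := fun he => hP'irr cj' (he ▸ h)
        rcases hPi.1 d cj' hne with h' | h'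
        · exact hP h'
        · exact (hkey cj' d h' h).1 hcj'A
  · -- bottom segment
    set B : Set C := {d | d = ck' ∨ Pi ck' d} with hB
    have hdn : ∀ x y, x ∈ B → Pi x y → y ∈ B := by
      rintro x y (rfl | hx) hxy
      · exact Or.inr hxy
      · exact Or.inr (hPi.2.2 ck' x y hx hxy)
    have hckB : ck ∉ B := by
      rintro (rfl | h)
      · exact hPi.2.1 ck hck'
      · exact hPiasym ck ck' hck' h
    have hcjB : cj ∉ B := by
      have hcj2 : Pi cj ck' := hPi.2.2 cj ck ck' hjk hck'
      rintro (rfl | h)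
      · exact hPi.2.1 cj hcj2
      · exact hPiasym cj ck' hcj2 h
    have hkey := key_bot Q Pi hPi cj ck P' ⟨⟨⟨hP'tot, hP'irr, hP'tr⟩, hExt, hkj⟩, hmin⟩
      B hdn hcjB hckB hPiQ
    have hck'B : ck' ∈ B := Or.inl rfl
    ext d
    simp only [Set.mem_setOf_eq]
    constructor
    · rintro (rfl | h)
      · exact Or.inl rfl
      · refine Or.inr ?_
        by_contra hP
        have hne : ck' ≠ d := fun he => hPi.2.1 ck' (he ▸ h)
        rcases hP'tot ck' d hne with h' | h'
        · exact hP h'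
        · exact (hkey ck' d h h').1 hck'B
    · rintro (rfl | h)
      · exact Or.inl rfl
      · refine Or.inr ?_
        by_contra hP
        have hne : ck' ≠ d := fun he => hP'irr ck' (he ▸ h)
        rcases hPi.1 ck' d hne with h' | h'
        · exact hP h'
        · exact (hkey d ck' h' h).2 hck'B
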